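/- There is no quadruple of measurable functions A : Λ → ℝ³, B : Λ → ℝ³, C : Λ → ℝ (with respect to a measure space (Λ, μ)) satisfying: ‖B(λ)‖ ≤ 1 and ‖A(λ)‖ ≤ C(λ) for all λ; ∫ Bᵢ Aⱼ dμ = δᵢⱼ for all i, j ∈ {1,2,3}; and ∫ C dμ = 1. -/

import Mathlib

open MeasureTheory

theorem stmt12 {Λ : Type*} [MeasurableSpace Λ] (μ : Measure Λ) :
    ¬ ∃ (A B : Λ → EuclideanSpace ℝ (Fin 3)) (C : Λ → ℝ),
      Measurable A ∧ Measurable B ∧ Measurable C ∧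
      (∀ l, ‖B l‖ ≤ 1) ∧ (∀ l, ‖A l‖ ≤ C l) ∧
      (∀ i j : Fin 3, Integrable (fun l => B l i * A l j) μ) ∧
      (∀ i j : Fin 3, ∫ l, B l i * A l j ∂μ = if i = j then 1 else 0) ∧
      Integrable C μ ∧ (∫ l, C l ∂μ = 1) := by
  rintro ⟨A, B, C, hA, hB, hC, hB1, hAC, hint, heq, hCint, hCeq⟩
  have hsint : Integrable (fun l => ∑ i : Fin 3, B l i * A l i) μ :=
    integrable_finset_sum _ fun i _ => hint i i
  have h3 : ∫ l, ∑ i : Fin 3, B l i * A l i ∂μ = 3 := by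
    rw [integral_finset_sum _ fun i _ => hint i i]
    simp [heq]
  have hle : ∫ l, ∑ i : Fin 3, B l i * A l i ∂μ ≤ ∫ l, C l ∂μ := by
    refine integral_mono hsint hCint fun l => ?_
    have hinner : ∑ i : Fin 3, B l i * A l i = inner ℝ (B l) (A l) := by
      rw [PiLp.inner_apply]; simp [mul_comm]
    calc ∑ i : Fin 3, B l i * A l i = inner ℝ (B l) (A l) := hinner
      _ ≤ ‖B l‖ * ‖A l‖ := real_inner_le_norm _ _
      _ ≤ 1 * C l :=
        mul_le_mul (hB1 l) (hAC l) (norm_nonneg _) zero_le_one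
      _ = C l := one_mul _
  rw [h3, hCeq] at hle
  norm_num at hle
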